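/- Let G be a group such that its center Z(G) is torsion-free (i.e., every non-identity element of Z(G) has infinite order) and such that the quotient G/Z(G) is a torsion group (i.e., for every g ∈ G there exists an integer n ≥ 1 with gⁿ ∈ Z(G)). Then Z(G) ∩ { [a,b] : a, b ∈ G } = {e}; equivalently, the quotient map G → G/Z(G) is a commutant-preserving extension (G is self-CP). -/

import Mathlib

/-- If `Z(G)` is torsion-free and `G/Z(G)` is a torsion group, then the
center meets the set of commutators only in the identity (i.e. `G` is
self-CP). -/
theorem center_inter_commutators_of_torsionfree_center {G : Type*} [Group G]
    (htf : ∀ z : G, z ∈ Subgroup.center G → z ≠ 1 →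
      ∀ n : ℕ, 0 < n → z ^ n ≠ 1)
    (htor : ∀ g : G, ∃ n : ℕ, 1 ≤ n ∧ g ^ n ∈ Subgroup.center G) :
    (Subgroup.center G : Set G) ∩ {x : G | ∃ a b : G, x = a * b * a⁻¹ * b⁻¹} = {1} := by
  ext x
  constructor
  · rintro ⟨hx, a, b, rfl⟩
    set z := a * b * a⁻¹ * b⁻¹ with hz
    obtain ⟨n, hn1, hna⟩ := htor a
    have hcomm : a * b = z * (b * a) := by rw [hz]; group
    have key : ∀ k : ℕ, a ^ k * b = z ^ k * (b * a ^ k) := by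
      intro k
      induction k with
      | zero => simp
      | succ k ih =>
        have hzkc : a * z ^ k = z ^ k * a :=
          Subgroup.mem_center_iff.mp (pow_mem hx k) a
        calc a ^ (k + 1) * b = a * (a ^ k * b) := by rw [pow_succ']; group
          _ = a * z ^ k * (b * a ^ k) := by rw [ih]; group
          _ = z ^ k * (a * b * a ^ k) := by rw [hzkc]; group
          _ = z ^ k * (z * (b * a) * a ^ k) := by rw [hcomm]
          _ = z ^ (k + 1) * (b * a ^ (k + 1)) := by rw [pow_succ, pow_succ']; group
    have hanc : a ^ n * b = b * a ^ n := (Subgroup.mem_center_iff.mp hna b).symm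
    have hzn : z ^ n = 1 := by
      have h := key n
      rw [← hanc] at h
      exact (right_eq_mul.mp h)
    show z = 1
    by_contra hne
    exact htf z hx hne n hn1 hzn
  · rintro rfl
    exact ⟨Subgroup.one_mem _, 1, 1, by group⟩
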